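/- For a finite poset P with antichains A and B (A ≠ B), the segment joining ρ(A) and ρ(B) is an edge of the chain polytope C(P) if and only if the symmetric difference (A \ B) ∪ (B \ A) is connected as a subposet of P. -/

import Mathlib

/-- Indicator vector of a subset `W` of `P` in `ℝ^P`. -/
noncomputable def rho {P : Type*} (W : Set P) : P → ℝ := W.indicator fun _ => 1

/-- The order polytope of a finite poset `P`. -/
def orderPolytope (P : Type*) [Fintype P] [PartialOrder P] : Set (P → ℝ) :=
  {f | (∀ i, 0 ≤ f i ∧ f i ≤ 1) ∧ ∀ i j : P, i ≤ j → f j ≤ f i}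

/-- The chain polytope of a finite poset `P`. -/
def chainPolytope (P : Type*) [Fintype P] [PartialOrder P] : Set (P → ℝ) :=
  {f | (∀ i, 0 ≤ f i) ∧ ∀ C : Finset P, IsMaxChain (· ≤ ·) (C : Set P) → ∑ i ∈ C, f i ≤ 1}

/-- A subset `S` of a poset `P` is connected in `P` if any two of its elements are
joined by a sequence within `S` whose consecutive members are comparable in `P`. -/
def ConnIn {P : Type*} [PartialOrder P] (S : Set P) : Prop :=
  ∀ x ∈ S, ∀ y ∈ S,
    Relation.ReflTransGen (fun u v => u ∈ S ∧ v ∈ S ∧ (u ≤ v ∨ v ≤ u)) x y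

/-- The segment joining `u` and `v` is an edge (one-dimensional face) of `S`. -/
def IsEdgeOf {E : Type*} [AddCommGroup E] [Module ℝ E] (S : Set E) (u v : E) : Prop :=
  u ≠ v ∧ IsExtreme ℝ S (segment ℝ u v)

/-- The set of maximal elements of a subset of a poset. -/
def maxSet {P : Type*} [PartialOrder P] (S : Set P) : Set P :=
  {x | x ∈ S ∧ ∀ y ∈ S, x ≤ y → x = y}

/-- The set of minimal elements of a subset of a poset. -/
def minSet {P : Type*} [PartialOrder P] (S : Set P) : Set P :=
  {x | x ∈ S ∧ ∀ y ∈ S, y ≤ x → x = y}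

/-- The 1-skeleton of the order polytope, combinatorially: vertices are poset
ideals, adjacency is proper inclusion with connected difference. -/
def orderSkeleton (P : Type*) [PartialOrder P] :
    SimpleGraph {I : Set P // IsLowerSet I} :=
  SimpleGraph.fromRel fun I J => I.1 ⊂ J.1 ∧ ConnIn (J.1 \ I.1)

/-- The 1-skeleton of the chain polytope, combinatorially: vertices are antichains,
adjacency is connectedness of the symmetric difference. -/
def chainSkeleton (P : Type*) [PartialOrder P] :
    SimpleGraph {A : Set P // IsAntichain (· ≤ ·) A} :=
  SimpleGraph.fromRel fun A B => ConnIn ((A.1 \ B.1) ∪ (B.1 \ A.1))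

/-- The multiset of vertex degrees of a graph (the degree sequence, up to order). -/
noncomputable def degMultiset {V : Type*} [Fintype V] (G : SimpleGraph V) : Multiset ℕ :=
  Finset.univ.val.map fun v => (G.neighborSet v).ncard

/-- `P` contains the poset `X = {a,b,c,g,h}` with `a<c, b<c, c<g, c<h` as a subposet. -/
def ContainsX (P : Type*) [PartialOrder P] : Prop :=
  ∃ a b c g h : P, a < c ∧ b < c ∧ c < g ∧ c < h ∧
    ¬ a ≤ b ∧ ¬ b ≤ a ∧ ¬ g ≤ h ∧ ¬ h ≤ g

/-- The pair `(I, J)` of poset ideals with `I ⊂ J` and `J \ I` connected in `P`. -/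
def OmegaP {P : Type*} [PartialOrder P] (I J : Set P) : Prop :=
  IsLowerSet I ∧ IsLowerSet J ∧ I ⊂ J ∧ ConnIn (J \ I)

/-- The pair `(A, B)` of distinct antichains with connected symmetric difference. -/
def PsiP {P : Type*} [PartialOrder P] (A B : Set P) : Prop :=
  IsAntichain (· ≤ ·) A ∧ IsAntichain (· ≤ ·) B ∧ A ≠ B ∧ ConnIn ((A \ B) ∪ (B \ A))

/-- First component of the map `Ω → Ψ`: `A = max J`. -/
def FmapA {P : Type*} [PartialOrder P] (_I J : Set P) : Set P := maxSet J

/-- Second component of the map `Ω → Ψ`: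
`B = min(J \ I) ∪ (max I ∩ max J)`, with `min(J \ I) := ∅` when `|J \ I| = 1`. -/
def FmapB {P : Type*} [PartialOrder P] (I J : Set P) : Set P :=
  (if (J \ I).ncard = 1 then ∅ else minSet (J \ I)) ∪ (maxSet I ∩ maxSet J)

noncomputable instance {P : Type*} [Fintype P] [PartialOrder P] :
    Fintype {I : Set P // IsLowerSet I} := Fintype.ofFinite _

noncomputable instance {P : Type*} [Fintype P] [PartialOrder P] :
    Fintype {A : Set P // IsAntichain (· ≤ ·) A} := Fintype.ofFinite _

section main
open Classical
variable {P : Type*} [Fintype P] [PartialOrder P]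

lemma rho_apply {P : Type*} (W : Set P) (i : P) : rho W i = if i ∈ W then 1 else 0 := by
  simp [rho, Set.indicator]

lemma rho_one {P : Type*} {W : Set P} {i : P} (h : i ∈ W) : rho W i = 1 := by
  simp [rho_apply, h]

lemma rho_zero {P : Type*} {W : Set P} {i : P} (h : i ∉ W) : rho W i = 0 := by
  simp [rho_apply, h]

lemma exists_maxChain_finset (s : Set P) (hs : IsChain (· ≤ ·) s) :
    ∃ C : Finset P, IsMaxChain (· ≤ ·) (C : Set P) ∧ s ⊆ (C : Set P) := by
  obtain ⟨t, ht, hst⟩ := hs.exists_maxChain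
  exact ⟨t.toFinite.toFinset, by simpa [Set.Finite.coe_toFinset] using ht,
    by simpa [Set.Finite.coe_toFinset] using hst⟩

lemma rho_mem_chainPolytope {A : Set P} (hA : IsAntichain (· ≤ ·) A) :
    rho A ∈ chainPolytope P := by
  constructor
  · intro i; rw [rho_apply]; positivity
  · intro C hC
    have h2 : ∑ i ∈ C, rho A i = ((C.filter (fun i => i ∈ A)).card : ℝ) := by
      simp [rho_apply, Finset.sum_boole]
    rw [h2]
    have h1 : (C.filter (fun i => i ∈ A)).card ≤ 1 := by
      rw [Finset.card_le_one]
      intro a ha b hb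
      simp only [Finset.mem_filter] at ha hb
      by_contra hab
      rcases hC.1 ha.1 hb.1 hab with h | h
      · exact hA ha.2 hb.2 hab h
      · exact hA hb.2 ha.2 (Ne.symm hab) h
    exact_mod_cast h1

lemma chainPolytope_convex : Convex ℝ (chainPolytope P) := by
  intro f hf g hg a b ha hb hab
  constructor
  · intro i
    have := hf.1 i; have := hg.1 i
    simp only [Pi.add_apply, Pi.smul_apply, smul_eq_mul]
    positivity
  · intro C hC
    simp only [Pi.add_apply, Pi.smul_apply, smul_eq_mul, Finset.sum_add_distrib,
      ← Finset.mul_sum]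
    calc a * ∑ i ∈ C, f i + b * ∑ i ∈ C, g i ≤ a * 1 + b * 1 := by
          gcongr
          exacts [hf.2 C hC, hg.2 C hC]
      _ = 1 := by linarith

lemma mem_le_one {f : P → ℝ} (hf : f ∈ chainPolytope P) (i : P) : f i ≤ 1 := by
  obtain ⟨C, hC, hiC⟩ := exists_maxChain_finset {i} (Set.subsingleton_singleton.isChain)
  have hi : i ∈ C := by simpa using hiC (Set.mem_singleton i)
  calc f i ≤ ∑ j ∈ C, f j := Finset.single_le_sum (fun j _ => hf.1 j) hi
    _ ≤ 1 := hf.2 C hC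

lemma add_le_one_of_comparable {f : P → ℝ} (hf : f ∈ chainPolytope P) {x y : P}
    (hxy : x ≤ y ∨ y ≤ x) (hne : x ≠ y) : f x + f y ≤ 1 := by
  have hchain : IsChain (· ≤ ·) ({x, y} : Set P) := by
    intro a ha b hb hab
    simp only [Set.mem_insert_iff, Set.mem_singleton_iff] at ha hb
    rcases ha with rfl | rfl <;> rcases hb with rfl | rfl <;> tauto
  obtain ⟨C, hC, hsub⟩ := exists_maxChain_finset _ hchain
  have hx : x ∈ C := by simpa using hsub (by simp)
  have hy : y ∈ C := by simpa using hsub (by simp)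
  calc f x + f y = ∑ j ∈ ({x, y} : Finset P), f j := by rw [Finset.sum_pair hne]
    _ ≤ ∑ j ∈ C, f j := Finset.sum_le_sum_of_subset_of_nonneg
        (by intro a ha; simp at ha; rcases ha with rfl | rfl <;> assumption)
        (fun j _ _ => hf.1 j)
    _ ≤ 1 := hf.2 C hC

lemma repr_of_connected {A B : Set P} (hA : IsAntichain (· ≤ ·) A)
    (hB : IsAntichain (· ≤ ·) B)
    (hconn : ConnIn ((A \ B) ∪ (B \ A)))
    (f : P → ℝ) (h0 : ∀ i, 0 ≤ f i) (hle1 : ∀ i, f i ≤ 1)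
    (h1 : ∀ i ∈ A ∩ B, f i = 1) (hout : ∀ i, i ∉ A ∪ B → f i = 0)
    (hpair : ∀ p ∈ A \ B, ∀ q ∈ B \ A, (p ≤ q ∨ q ≤ p) → f p + f q = 1)
    (x0 : P) (hx0 : x0 ∈ (A \ B) ∪ (B \ A)) :
    ∃ s : ℝ, 0 ≤ s ∧ s ≤ 1 ∧ f = s • rho A + (1 - s) • rho B := by
  set D := (A \ B) ∪ (B \ A) with hD
  set g : P → ℝ := fun z => if z ∈ A then f z else 1 - f z with hg
  have key : ∀ z ∈ D, g z = g x0 := by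
    intro z hz
    have hpath := hconn x0 hx0 z hz
    induction hpath with
    | refl => rfl
    | tail _ hstep ih =>
      rename_i b c _
      obtain ⟨hbD, hcD, hcomp⟩ := hstep
      rw [← ih hbD]
      by_cases hbc : b = c
      · rw [hbc]
      · rcases hbD with hb | hb <;> rcases hcD with hc | hc
        · exact absurd (hcomp.elim (hA hb.1 hc.1 hbc) (hA hc.1 hb.1 (Ne.symm hbc))) not_false
        · have := hpair b hb c hc hcomp
          simp only [hg, if_pos hb.1, if_neg hc.2]
          linarith
        · have := hpair c hc b hb (hcomp.symm)
          simp only [hg, if_neg hb.2, if_pos hc.1]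
          linarith
        · exact absurd (hcomp.elim (hB hb.1 hc.1 hbc) (hB hc.1 hb.1 (Ne.symm hbc))) not_false
  set s : ℝ := g x0 with hs
  have hs0 : 0 ≤ s ∧ s ≤ 1 := by
    rcases hx0 with h | h
    · simp only [hs, hg, if_pos h.1]; exact ⟨h0 x0, hle1 x0⟩
    · simp only [hs, hg, if_neg h.2]
      constructor <;> [linarith [hle1 x0]; linarith [h0 x0]]
  refine ⟨s, hs0.1, hs0.2, ?_⟩
  funext i
  simp only [Pi.add_apply, Pi.smul_apply, smul_eq_mul, rho_apply]
  by_cases hiA : i ∈ A <;> by_cases hiB : i ∈ B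
  · rw [if_pos hiA, if_pos hiB, h1 i ⟨hiA, hiB⟩]; ring
  · have hiD : i ∈ D := Or.inl ⟨hiA, hiB⟩
    have := key i hiD
    simp only [hg, if_pos hiA] at this
    rw [if_pos hiA, if_neg hiB, this]; ring
  · have hiD : i ∈ D := Or.inr ⟨hiB, hiA⟩
    have := key i hiD
    simp only [hg, if_neg hiA] at this
    rw [if_neg hiA, if_pos hiB]
    linarith
  · rw [if_neg hiA, if_neg hiB, hout i (by simp [hiA, hiB])]; ring

end main

theorem stmt1 {P : Type*} [Fintype P] [PartialOrder P] (A B : Set P)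
    (hA : IsAntichain (· ≤ ·) A) (hB : IsAntichain (· ≤ ·) B) (hne : A ≠ B) :
    IsEdgeOf (chainPolytope P) (rho A) (rho B) ↔ ConnIn ((A \ B) ∪ (B \ A)) := by
  classical
  have hDne : ∃ x0, x0 ∈ (A \ B) ∪ (B \ A) := by
    by_contra h
    push_neg at h
    apply hne
    ext i
    constructor
    · intro hi; by_contra hiB; exact h i (Or.inl ⟨hi, hiB⟩)
    · intro hi; by_contra hiA; exact h i (Or.inr ⟨hi, hiA⟩)
  obtain ⟨x0, hx0⟩ := hDne
  constructor
  · -- edge → connected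
    rintro ⟨-, hsub, hext⟩
    by_contra hconn
    unfold ConnIn at hconn
    push_neg at hconn
    obtain ⟨u0, hu0, v0, hv0, hpath⟩ := hconn
    set D := (A \ B) ∪ (B \ A) with hD
    set r : P → P → Prop := fun u v => u ∈ D ∧ v ∈ D ∧ (u ≤ v ∨ v ≤ u) with hr
    set S : Set P := {z | z ∈ D ∧ Relation.ReflTransGen r u0 z} with hS
    have hu0S : u0 ∈ S := ⟨hu0, Relation.ReflTransGen.refl⟩
    have hv0S : v0 ∉ S := fun h => hpath h.2
    have hsep : ∀ u ∈ S, ∀ v ∈ D, v ∉ S → ¬(u ≤ v ∨ v ≤ u) := by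
      intro u hu v hv hvS hcomp
      exact hvS ⟨hv, hu.2.tail ⟨hu.1, hv, hcomp⟩⟩
    set A' := (A ∩ B) ∪ (A ∩ S) ∪ (B ∩ (D \ S)) with hA'def
    set B' := (A ∩ B) ∪ (B ∩ S) ∪ (A ∩ (D \ S)) with hB'def
    have hSD : S ⊆ D := fun z hz => hz.1
    have hA' : IsAntichain (· ≤ ·) A' := by
      rintro u hu v hv huv hle
      rcases hu with (hu | hu) | hu <;> rcases hv with (hv | hv) | hv
      · exact hA hu.1 hv.1 huv hle
      · exact hA hu.1 hv.1 huv hle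
      · exact hB hu.2 hv.1 huv hle
      · exact hA hu.1 hv.1 huv hle
      · exact hA hu.1 hv.1 huv hle
      · exact hsep u hu.2 v hv.2.1 hv.2.2 (Or.inl hle)
      · exact hB hu.1 hv.2 huv hle
      · exact hsep v hv.2 u hu.2.1 hu.2.2 (Or.inr hle)
      · exact hB hu.1 hv.1 huv hle
    have hB' : IsAntichain (· ≤ ·) B' := by
      rintro u hu v hv huv hle
      rcases hu with (hu | hu) | hu <;> rcases hv with (hv | hv) | hv
      · exact hB hu.2 hv.2 huv hle
      · exact hB hu.2 hv.1 huv hle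
      · exact hA hu.1 hv.1 huv hle
      · exact hB hu.1 hv.2 huv hle
      · exact hB hu.1 hv.1 huv hle
      · exact hsep u hu.2 v hv.2.1 hv.2.2 (Or.inl hle)
      · exact hA hu.1 hv.1 huv hle
      · exact hsep v hv.2 u hu.2.1 hu.2.2 (Or.inr hle)
      · exact hA hu.1 hv.1 huv hle
    have hsum : ∀ i, rho A' i + rho B' i = rho A i + rho B i := by
      intro i
      by_cases hiA : i ∈ A <;> by_cases hiB : i ∈ B
      · have m1 : i ∈ A' := Or.inl (Or.inl ⟨hiA, hiB⟩)
        have m2 : i ∈ B' := Or.inl (Or.inl ⟨hiA, hiB⟩)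
        rw [rho_one m1, rho_one m2, rho_one hiA, rho_one hiB]
      · have hiD : i ∈ D := Or.inl ⟨hiA, hiB⟩
        by_cases hiS : i ∈ S
        · have m1 : i ∈ A' := Or.inl (Or.inr ⟨hiA, hiS⟩)
          have m2 : i ∉ B' := by
            rintro ((h | h) | h)
            exacts [hiB h.2, hiB h.1, h.2.2 hiS]
          rw [rho_one m1, rho_zero m2, rho_one hiA, rho_zero hiB]
        · have m1 : i ∉ A' := by
            rintro ((h | h) | h)
            exacts [hiB h.2, hiS h.2, hiB h.1]
          have m2 : i ∈ B' := Or.inr ⟨hiA, hiD, hiS⟩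
          rw [rho_zero m1, rho_one m2, rho_one hiA, rho_zero hiB]; ring
      · have hiD : i ∈ D := Or.inr ⟨hiB, hiA⟩
        by_cases hiS : i ∈ S
        · have m1 : i ∉ A' := by
            rintro ((h | h) | h)
            exacts [hiA h.1, hiA h.1, h.2.2 hiS]
          have m2 : i ∈ B' := Or.inl (Or.inr ⟨hiB, hiS⟩)
          rw [rho_zero m1, rho_one m2, rho_zero hiA, rho_one hiB]
        · have m1 : i ∈ A' := Or.inr ⟨hiB, hiD, hiS⟩
          have m2 : i ∉ B' := by
            rintro ((h | h) | h)
            exacts [hiA h.1, hiS h.2, hiA h.1]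
          rw [rho_one m1, rho_zero m2, rho_zero hiA, rho_one hiB]; ring
      · have m1 : i ∉ A' := by
          rintro ((h | h) | h)
          exacts [hiA h.1, hiA h.1, hiB h.1]
        have m2 : i ∉ B' := by
          rintro ((h | h) | h)
          exacts [hiA h.1, hiB h.1, hiA h.1]
        rw [rho_zero m1, rho_zero m2, rho_zero hiA, rho_zero hiB]
    set m : P → ℝ := (2⁻¹ : ℝ) • rho A + (2⁻¹ : ℝ) • rho B with hm
    have hmseg : m ∈ segment ℝ (rho A) (rho B) :=
      ⟨2⁻¹, 2⁻¹, by norm_num, by norm_num, by norm_num, rfl⟩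
    have hmopen : m ∈ openSegment ℝ (rho A') (rho B') := by
      refine ⟨2⁻¹, 2⁻¹, by norm_num, by norm_num, by norm_num, ?_⟩
      funext i
      simp only [hm, Pi.add_apply, Pi.smul_apply, smul_eq_mul]
      linarith [hsum i]
    have hA'seg := hext (rho_mem_chainPolytope hA') (rho_mem_chainPolytope hB')
      hmseg hmopen
    obtain ⟨c, d, hc, hd, hcd, hE⟩ := hA'seg
    have hEi : ∀ i, c * rho A i + d * rho B i = rho A' i := by
      intro i
      have := congrFun hE i
      simpa using this
    -- from u0 get c = 1
    have hc1 : c = 1 := by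
      rcases hu0 with h | h
      · have m1 : u0 ∈ A' := Or.inl (Or.inr ⟨h.1, hu0S⟩)
        have e := hEi u0
        rw [rho_one h.1, rho_zero h.2, rho_one m1] at e
        linarith
      · have m1 : u0 ∉ A' := by
          rintro ((hh | hh) | hh)
          exacts [h.2 hh.1, h.2 hh.1, hh.2.2 hu0S]
        have e := hEi u0
        rw [rho_zero h.2, rho_one h.1, rho_zero m1] at e
        linarith
    have hd0 : d = 0 := by linarith
    -- contradiction at v0
    rcases hv0 with h | h
    · have m1 : v0 ∉ A' := by
        rintro ((hh | hh) | hh)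
        exacts [h.2 hh.2, hv0S hh.2, h.2 hh.1]
      have e := hEi v0
      rw [rho_one h.1, rho_zero h.2, rho_zero m1, hc1, hd0] at e
      linarith
    · have m1 : v0 ∈ A' := Or.inr ⟨h.1, Or.inr h, hv0S⟩
      have e := hEi v0
      rw [rho_zero h.2, rho_one h.1, rho_one m1, hc1, hd0] at e
      linarith
  · -- connected → edge
    intro hconn
    refine ⟨?_, ?_, ?_⟩
    · -- rho A ≠ rho B
      intro h
      have := congrFun h x0
      rcases hx0 with hx | hx
      · rw [rho_one hx.1, rho_zero hx.2] at this; norm_num at this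
      · rw [rho_zero hx.2, rho_one hx.1] at this; norm_num at this
    · exact (chainPolytope_convex).segment_subset (rho_mem_chainPolytope hA)
        (rho_mem_chainPolytope hB)
    · intro x₁ hx₁ x₂ hx₂ z hz hzo
      obtain ⟨t, u, ht, hu, htu, hz'⟩ := hz
      obtain ⟨a, b, ha, hb, hab, hzo'⟩ := hzo
      have hzi : ∀ i, a * x₁ i + b * x₂ i = t * rho A i + u * rho B i := by
        intro i
        have h1 := congrFun hzo' i
        have h2 := congrFun hz' i
        simp only [Pi.add_apply, Pi.smul_apply, smul_eq_mul] at h1 h2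
        rw [h1, ← h2]
      -- pointwise facts for both x₁ and x₂
      have h1both : ∀ i ∈ A ∩ B, x₁ i = 1 ∧ x₂ i = 1 := by
        intro i hi
        have hzi' := hzi i
        rw [rho_one hi.1, rho_one hi.2] at hzi'
        have l1 := mem_le_one hx₁ i
        have l2 := mem_le_one hx₂ i
        constructor <;> nlinarith
      have houtboth : ∀ i, i ∉ A ∪ B → x₁ i = 0 ∧ x₂ i = 0 := by
        intro i hi
        have hiA : i ∉ A := fun h => hi (Or.inl h)
        have hiB : i ∉ B := fun h => hi (Or.inr h)
        have hzi' := hzi i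
        rw [rho_zero hiA, rho_zero hiB] at hzi'
        have l1 := hx₁.1 i
        have l2 := hx₂.1 i
        constructor <;> nlinarith
      have hpairboth : ∀ p ∈ A \ B, ∀ q ∈ B \ A, (p ≤ q ∨ q ≤ p) →
          (x₁ p + x₁ q = 1 ∧ x₂ p + x₂ q = 1) := by
        intro p hp q hq hcomp
        have hpq : p ≠ q := fun h => hp.2 (h ▸ hq.1)
        have l1 := add_le_one_of_comparable hx₁ hcomp hpq
        have l2 := add_le_one_of_comparable hx₂ hcomp hpq
        have e1 := hzi p
        have e2 := hzi q
        rw [rho_one hp.1, rho_zero hp.2] at e1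
        rw [rho_zero hq.2, rho_one hq.1] at e2
        constructor <;> nlinarith
      have key : ∀ f, f ∈ chainPolytope P → (∀ i ∈ A ∩ B, f i = 1) →
          (∀ i, i ∉ A ∪ B → f i = 0) →
          (∀ p ∈ A \ B, ∀ q ∈ B \ A, (p ≤ q ∨ q ≤ p) → f p + f q = 1) →
          f ∈ segment ℝ (rho A) (rho B) := by
        intro f hf hf1 hfout hfpair
        obtain ⟨s, hs0, hs1, hfs⟩ := repr_of_connected hA hB hconn f hf.1
          (mem_le_one hf) hf1 hfout hfpair x0 hx0
        exact ⟨s, 1 - s, hs0, by linarith, by ring, hfs.symm⟩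
      exact key x₁ hx₁ (fun i hi => (h1both i hi).1) (fun i hi => (houtboth i hi).1)
          (fun p hp q hq hc => (hpairboth p hp q hq hc).1)
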